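/- Let ℓ > 0, α ≠ 0, P ≠ 0, and μ ∈ ℝ. With m(r) = αP⁴ℓ³/(20r⁵) − P²ℓ/(4r) + μ, define A(r) = 4m(r)ℓ/r³ − 4m'(r)ℓ/r² + 2m''(r)ℓ/r − 1/ℓ², B(r) = −2m(r)ℓ/r³ + 2m'(r)ℓ/r² − 1/ℓ², C(r) = 4m(r)ℓ/r³ − 1/ℓ², and K(r) = 4A(r)² + 16B(r)² + 4C(r)². Then K(r) → 24/ℓ⁴ as r → +∞, and K(r) → +∞ as r → 0⁺. -/

import Mathlib

open Filter Topology Set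

private lemma eh_aux1 (a b μ : ℝ) {r : ℝ} (hr : r ≠ 0) :
    HasDerivAt (fun r : ℝ => a / (20 * r ^ 5) - b / (4 * r) + μ)
      (-a / (4 * r ^ 6) + b / (4 * r ^ 2)) r := by
  have h5 : HasDerivAt (fun r : ℝ => 20 * r ^ 5) (20 * ((5:ℕ) * r ^ 4)) r :=
    (hasDerivAt_pow 5 r).const_mul 20
  have h1 : HasDerivAt (fun r : ℝ => 4 * r) (4 * 1) r := (hasDerivAt_id r).const_mul 4
  have hd1 := (hasDerivAt_const r a).div h5 (by positivity)
  have hd2 := (hasDerivAt_const r b).div h1 (by simp [hr])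
  have h := (hd1.sub hd2).add_const μ
  refine h.congr_deriv ?_
  push_cast
  field_simp
  ring

private lemma eh_aux2 (a b : ℝ) {r : ℝ} (hr : r ≠ 0) :
    HasDerivAt (fun r : ℝ => -a / (4 * r ^ 6) + b / (4 * r ^ 2))
      (3 * a / (2 * r ^ 7) - b / (2 * r ^ 3)) r := by
  have h6 : HasDerivAt (fun r : ℝ => 4 * r ^ 6) (4 * ((6:ℕ) * r ^ 5)) r :=
    (hasDerivAt_pow 6 r).const_mul 4
  have h2 : HasDerivAt (fun r : ℝ => 4 * r ^ 2) (4 * ((2:ℕ) * r ^ 1)) r :=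
    (hasDerivAt_pow 2 r).const_mul 4
  have hd1 := (hasDerivAt_const r (-a)).div h6 (by positivity)
  have hd2 := (hasDerivAt_const r b).div h2 (by positivity)
  have h := hd1.add hd2
  refine h.congr_deriv ?_
  push_cast
  field_simp
  ring

set_option maxHeartbeats 2000000 in
theorem euler_heisenberg_kretschmann (ℓ α P μ : ℝ) (hℓ : 0 < ℓ) (hα : α ≠ 0) (hP : P ≠ 0)
    (m : ℝ → ℝ)
    (hm : ∀ r, m r = α * P ^ 4 * ℓ ^ 3 / (20 * r ^ 5) - P ^ 2 * ℓ / (4 * r) + μ)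
    (A B C K : ℝ → ℝ)
    (hA : ∀ r, A r = 4 * m r * ℓ / r ^ 3 - 4 * deriv m r * ℓ / r ^ 2
        + 2 * deriv (deriv m) r * ℓ / r - 1 / ℓ ^ 2)
    (hB : ∀ r, B r = -2 * m r * ℓ / r ^ 3 + 2 * deriv m r * ℓ / r ^ 2 - 1 / ℓ ^ 2)
    (hC : ∀ r, C r = 4 * m r * ℓ / r ^ 3 - 1 / ℓ ^ 2)
    (hK : ∀ r, K r = 4 * A r ^ 2 + 16 * B r ^ 2 + 4 * C r ^ 2) :
    Tendsto K atTop (𝓝 (24 / ℓ ^ 4)) ∧ Tendsto K (𝓝[>] (0:ℝ)) atTop := by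
  set a := α * P ^ 4 * ℓ ^ 3 with ha_def
  set b := P ^ 2 * ℓ with hb_def
  have hℓ0 : ℓ ≠ 0 := hℓ.ne'
  have ha0 : a ≠ 0 := by rw [ha_def]; positivity
  have hmf : m = fun r : ℝ => a / (20 * r ^ 5) - b / (4 * r) + μ := funext hm
  have hd1 : ∀ r : ℝ, r ≠ 0 → deriv m r = -a / (4 * r ^ 6) + b / (4 * r ^ 2) := by
    intro r hr
    rw [hmf]
    exact (eh_aux1 a b μ hr).deriv
  have hd2 : ∀ r : ℝ, r ≠ 0 → deriv (deriv m) r = 3 * a / (2 * r ^ 7) - b / (2 * r ^ 3) := by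
    intro r hr
    have heq : deriv m =ᶠ[𝓝 r] fun r : ℝ => -a / (4 * r ^ 6) + b / (4 * r ^ 2) :=
      (eventually_ne_nhds hr).mono fun x hx => hd1 x hx
    rw [heq.deriv_eq]
    exact (eh_aux2 a b hr).deriv
  have hA' : ∀ r : ℝ, r ≠ 0 →
      A r = 21 * a / 5 * ℓ / r ^ 8 - 3 * b * ℓ / r ^ 4 + 4 * μ * ℓ / r ^ 3 - 1 / ℓ ^ 2 := by
    intro r hr
    rw [hA, hm, hd1 r hr, hd2 r hr]
    field_simp
    ring
  have hB' : ∀ r : ℝ, r ≠ 0 →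
      B r = -(3 * a / 5) * ℓ / r ^ 8 + b * ℓ / r ^ 4 - 2 * μ * ℓ / r ^ 3 - 1 / ℓ ^ 2 := by
    intro r hr
    rw [hB, hm, hd1 r hr]
    field_simp
    ring
  have hC' : ∀ r : ℝ, r ≠ 0 →
      C r = a / 5 * ℓ / r ^ 8 - b * ℓ / r ^ 4 + 4 * μ * ℓ / r ^ 3 - 1 / ℓ ^ 2 := by
    intro r hr
    rw [hC, hm]
    field_simp
    ring
  have hpow : ∀ (c : ℝ) (n : ℕ), n ≠ 0 → Tendsto (fun r : ℝ => c / r ^ n) atTop (𝓝 0) := by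
    intro c n hn
    have h := (tendsto_pow_atTop hn).inv_tendsto_atTop.const_mul c
    simpa [div_eq_mul_inv] using h
  constructor
  · -- limit at infinity
    have hAlim : Tendsto A atTop (𝓝 (-(1 / ℓ ^ 2))) := by
      have h : Tendsto (fun r : ℝ =>
          21 * a / 5 * ℓ / r ^ 8 - 3 * b * ℓ / r ^ 4 + 4 * μ * ℓ / r ^ 3 - 1 / ℓ ^ 2)
          atTop (𝓝 (0 - 0 + 0 - 1 / ℓ ^ 2)) :=
        (((hpow _ 8 (by norm_num)).sub (hpow _ 4 (by norm_num))).add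
          (hpow _ 3 (by norm_num))).sub_const _
      rw [show (0:ℝ) - 0 + 0 - 1 / ℓ ^ 2 = -(1 / ℓ ^ 2) by ring] at h
      exact h.congr' (((eventually_ne_atTop 0).mono fun r hr => (hA' r hr).symm))
    have hBlim : Tendsto B atTop (𝓝 (-(1 / ℓ ^ 2))) := by
      have h : Tendsto (fun r : ℝ =>
          -(3 * a / 5) * ℓ / r ^ 8 + b * ℓ / r ^ 4 - 2 * μ * ℓ / r ^ 3 - 1 / ℓ ^ 2)
          atTop (𝓝 (0 + 0 - 0 - 1 / ℓ ^ 2)) :=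
        (((hpow _ 8 (by norm_num)).add (hpow _ 4 (by norm_num))).sub
          (hpow _ 3 (by norm_num))).sub_const _
      rw [show (0:ℝ) + 0 - 0 - 1 / ℓ ^ 2 = -(1 / ℓ ^ 2) by ring] at h
      exact h.congr' (((eventually_ne_atTop 0).mono fun r hr => (hB' r hr).symm))
    have hClim : Tendsto C atTop (𝓝 (-(1 / ℓ ^ 2))) := by
      have h : Tendsto (fun r : ℝ =>
          a / 5 * ℓ / r ^ 8 - b * ℓ / r ^ 4 + 4 * μ * ℓ / r ^ 3 - 1 / ℓ ^ 2)
          atTop (𝓝 (0 - 0 + 0 - 1 / ℓ ^ 2)) :=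
        (((hpow _ 8 (by norm_num)).sub (hpow _ 4 (by norm_num))).add
          (hpow _ 3 (by norm_num))).sub_const _
      rw [show (0:ℝ) - 0 + 0 - 1 / ℓ ^ 2 = -(1 / ℓ ^ 2) by ring] at h
      exact h.congr' (((eventually_ne_atTop 0).mono fun r hr => (hC' r hr).symm))
    have hKlim : Tendsto K atTop
        (𝓝 (4 * (-(1 / ℓ ^ 2)) ^ 2 + 16 * (-(1 / ℓ ^ 2)) ^ 2 + 4 * (-(1 / ℓ ^ 2)) ^ 2)) := by
      have h := (((hAlim.pow 2).const_mul 4).add ((hBlim.pow 2).const_mul 16)).add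
        ((hClim.pow 2).const_mul 4)
      exact h.congr fun r => (hK r).symm
    have : 4 * (-(1 / ℓ ^ 2)) ^ 2 + 16 * (-(1 / ℓ ^ 2)) ^ 2 + 4 * (-(1 / ℓ ^ 2)) ^ 2
        = 24 / ℓ ^ 4 := by field_simp; ring
    rwa [this] at hKlim
  · -- divergence at the axis
    set N : ℝ → ℝ := fun r =>
      (21 * a / 5 * ℓ - 3 * b * ℓ * r ^ 4 + 4 * μ * ℓ * r ^ 5 - r ^ 8 / ℓ ^ 2) ^ 2 with hN_def
    have hNcont : Continuous N := by
      apply Continuous.pow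
      continuity
    have hN0 : N 0 = (21 * a / 5 * ℓ) ^ 2 := by simp [hN_def]
    have hN0pos : 0 < N 0 := by
      rw [hN0]; positivity
    have hNlim : Tendsto N (𝓝[>] (0:ℝ)) (𝓝 (N 0)) :=
      (hNcont.tendsto 0).mono_left nhdsWithin_le_nhds
    have h16 : Tendsto (fun r : ℝ => r ^ 16) (𝓝[>] (0:ℝ)) (𝓝[>] (0:ℝ)) := by
      apply tendsto_nhdsWithin_of_tendsto_nhds_of_eventually_within
      · simpa using ((continuous_pow 16).tendsto 0).mono_left
          (nhdsWithin_le_nhds (s := Ioi (0:ℝ)))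
      · exact eventually_mem_nhdsWithin.mono fun r hr => mem_Ioi.mpr (pow_pos (mem_Ioi.mp hr) 16)
    have hinv : Tendsto (fun r : ℝ => (r ^ 16)⁻¹) (𝓝[>] (0:ℝ)) atTop :=
      tendsto_inv_nhdsGT_zero.comp h16
    have hmain : Tendsto (fun r : ℝ => N r * (r ^ 16)⁻¹) (𝓝[>] (0:ℝ)) atTop :=
      hNlim.pos_mul_atTop hN0pos hinv
    apply tendsto_atTop_mono' _ _ hmain
    filter_upwards [eventually_mem_nhdsWithin] with r hr
    have hr0 : r ≠ 0 := ne_of_gt hr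
    have hAsq : A r ^ 2 = N r * (r ^ 16)⁻¹ := by
      rw [hA' r hr0, hN_def]
      have : r ^ 8 ≠ 0 := pow_ne_zero _ hr0
      field_simp
    rw [hK r, ← hAsq]
    nlinarith [sq_nonneg (A r), sq_nonneg (B r), sq_nonneg (C r)]
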